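/- Let P be a finite (2+2)-free poset. Then the number of linear extensions of P equals the number of permutations σ of the ground set of P such that every orbit (cycle) of σ is an antichain of P. -/

import Mathlib

/-- A finite poset is `(2+2)`-free if it contains no induced subposet isomorphic to
the disjoint union of two 2-element chains. -/
def IsTTFree (β : Type*) [PartialOrder β] : Prop :=
  ¬ ∃ a b c d : β, a < b ∧ c < d ∧
    (¬ a ≤ c ∧ ¬ c ≤ a) ∧ (¬ a ≤ d ∧ ¬ d ≤ a) ∧ (¬ b ≤ c ∧ ¬ c ≤ b) ∧ (¬ b ≤ d ∧ ¬ d ≤ b)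

section Auxiliary

open Equiv Equiv.Perm

variable {β : Type*}

lemma sc_apply (σ : Equiv.Perm β) (a : β) : σ.SameCycle a (σ a) := ⟨1, by simp⟩

lemma sc_ind [Finite β] (σ : Equiv.Perm β) (x : β) (R : β → Prop) (h0 : R x)
    (hs : ∀ y, R y → R (σ y)) {y : β} (h : σ.SameCycle x y) : R y := by
  obtain ⟨k, -, rfl⟩ := h.exists_pow_eq'
  clear h
  induction k with
  | zero => simpa using h0
  | succ m ih =>
      rw [pow_succ', Equiv.Perm.mul_apply]
      exact hs _ ih

lemma splice_up [Finite β] [DecidableEq β] (σ : Equiv.Perm β) (x₁ u : β) (hu : σ u = u)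
    {a b : β} (h : σ.SameCycle a b) : (σ * Equiv.swap x₁ u).SameCycle a b := by
  rcases eq_or_ne u x₁ with rfl | hne
  · simpa [Equiv.swap_self, ← Equiv.Perm.one_def] using h
  · refine sc_ind σ a (fun y => (σ * Equiv.swap x₁ u).SameCycle a y)
      (Equiv.Perm.SameCycle.refl _ _) ?_ h
    intro y hy
    have happ : ∀ c, (σ * Equiv.swap x₁ u) c = σ (Equiv.swap x₁ u c) := fun c => rfl
    by_cases hyx : y = x₁
    · have h1 : (σ * Equiv.swap x₁ u) x₁ = u := by
        rw [happ, Equiv.swap_apply_left, hu]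
      have h2 : (σ * Equiv.swap x₁ u) u = σ x₁ := by
        rw [happ, Equiv.swap_apply_right]
      rw [hyx] at hy ⊢
      exact (hy.trans (h1 ▸ sc_apply (σ * Equiv.swap x₁ u) x₁)).trans
        (h2 ▸ sc_apply (σ * Equiv.swap x₁ u) u)
    · by_cases hyu : y = u
      · rw [hyu] at hy ⊢
        rwa [hu]
      · have h3 : (σ * Equiv.swap x₁ u) y = σ y := by
          rw [happ, Equiv.swap_apply_of_ne_of_ne hyx hyu]
        exact hy.trans (h3 ▸ sc_apply (σ * Equiv.swap x₁ u) y)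

lemma splice_down [Finite β] [DecidableEq β] (σ : Equiv.Perm β) (x₁ u : β) (hu : σ u = u)
    (hne : u ≠ x₁) {a b : β} (h : (σ * Equiv.swap x₁ u).SameCycle a b) :
    (a ≠ u → b ≠ u → σ.SameCycle a b) ∧ (a = u → b ≠ u → σ.SameCycle x₁ b) ∧
      (a ≠ u → b = u → σ.SameCycle a x₁) := by
  refine sc_ind (σ * Equiv.swap x₁ u) a
    (fun y => (a ≠ u → y ≠ u → σ.SameCycle a y) ∧ (a = u → y ≠ u → σ.SameCycle x₁ y) ∧
      (a ≠ u → y = u → σ.SameCycle a x₁)) ?_ ?_ h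
  · exact ⟨fun _ _ => Equiv.Perm.SameCycle.refl _ _,
      fun h1 h2 => absurd h1 h2, fun h1 h2 => absurd h2 h1⟩
  · intro y hy
    have happ : ∀ c, (σ * Equiv.swap x₁ u) c = σ (Equiv.swap x₁ u c) := fun c => rfl
    by_cases hyx : y = x₁
    · have h1 : (σ * Equiv.swap x₁ u) y = u := by
        rw [happ, hyx, Equiv.swap_apply_left, hu]
      rw [h1]
      refine ⟨fun _ h2 => absurd rfl h2, fun _ h2 => absurd rfl h2, fun ha _ => ?_⟩
      have := hy.1 ha (by rw [hyx]; exact hne.symm)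
      rwa [hyx] at this
    · by_cases hyu : y = u
      · have h2 : (σ * Equiv.swap x₁ u) y = σ x₁ := by
          rw [happ, hyu, Equiv.swap_apply_right]
        rw [h2]
        have hσx₁ : σ x₁ ≠ u := fun hh => hne (σ.injective (by rw [hu, hh])).symm
        exact ⟨fun ha _ => (hy.2.2 ha hyu).trans (sc_apply _ x₁),
          fun _ _ => sc_apply _ x₁, fun _ hh => absurd hh hσx₁⟩
      · have h3 : (σ * Equiv.swap x₁ u) y = σ y := by
          rw [happ, Equiv.swap_apply_of_ne_of_ne hyx hyu]
        rw [h3]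
        have hσy : σ y ≠ u := fun hh => hyu (σ.injective (by rw [hu, hh]))
        exact ⟨fun ha _ => (hy.1 ha hyu).trans (sc_apply _ y),
          fun ha _ => (hy.2.1 ha hyu).trans (sc_apply _ y),
          fun _ hh => absurd hh hσy⟩

lemma subtypePerm_sc [Finite β] (σ : Equiv.Perm β) {p : β → Prop}
    (hp : ∀ y, p (σ y) ↔ p y) {a b : Subtype p}
    (h : (σ.subtypePerm hp).SameCycle a b) : σ.SameCycle a.1 b.1 := by
  refine sc_ind (σ.subtypePerm hp) a (fun y : Subtype p => σ.SameCycle a.1 y.1)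
    (Equiv.Perm.SameCycle.refl _ _) ?_ h
  intro y hy
  have : ((σ.subtypePerm hp) y).1 = σ y.1 := rfl
  rw [this]
  exact hy.trans (sc_apply _ _)

lemma ofSubtype_sc [Finite β] {p : β → Prop} [DecidablePred p] (σs : Equiv.Perm (Subtype p))
    {a b : β} (h : (Equiv.Perm.ofSubtype σs).SameCycle a b) :
    a = b ∨ ∃ (ha : p a) (hb : p b), σs.SameCycle ⟨a, ha⟩ ⟨b, hb⟩ := by
  have key : (b = a ∨ ∃ (ha : p a) (hb : p b), σs.SameCycle ⟨a, ha⟩ ⟨b, hb⟩) := by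
    refine sc_ind (Equiv.Perm.ofSubtype σs) a
      (fun y => y = a ∨ ∃ (ha : p a) (hy : p y), σs.SameCycle ⟨a, ha⟩ ⟨y, hy⟩)
      (Or.inl rfl) ?_ h
    intro y hy
    rcases hy with rfl | ⟨ha, hy', sc⟩
    · by_cases hpa : p y
      · rw [Equiv.Perm.ofSubtype_apply_of_mem σs hpa]
        exact Or.inr ⟨hpa, (σs ⟨y, hpa⟩).2, by
          simpa using sc_apply σs ⟨y, hpa⟩⟩
      · rw [Equiv.Perm.ofSubtype_apply_of_not_mem σs hpa]
        exact Or.inl rfl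
    · rw [Equiv.Perm.ofSubtype_apply_of_mem σs hy']
      exact Or.inr ⟨ha, (σs ⟨y, hy'⟩).2, sc.trans (by simpa using sc_apply σs ⟨y, hy'⟩)⟩
  rcases key with rfl | hk
  · exact Or.inl rfl
  · exact Or.inr hk

section Order
variable [PartialOrder β]

lemma min_incomp {a b : β} (ha : IsMin a) (hb : IsMin b) (hne : a ≠ b) :
    ¬ a ≤ b ∧ ¬ b ≤ a :=
  ⟨fun h => hne (le_antisymm h (hb h)), fun h => hne (le_antisymm (ha h) h)⟩

lemma exists_min_le [Finite β] (z : β) : ∃ w, IsMin w ∧ w ≤ z := by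
  obtain ⟨b, hb, hmin⟩ := exists_minimal_le_of_wellFoundedLT (fun _ => True) z trivial
  exact ⟨b, fun c hc => hmin.2 trivial hc, hb⟩

lemma upsets_comp (hfree : IsTTFree β) {a b : β} (ha : IsMin a) (hb : IsMin b) :
    (∀ z, a < z → b < z) ∨ (∀ z, b < z → a < z) := by
  by_contra hcon
  push_neg at hcon
  obtain ⟨⟨c, hac, hbc⟩, ⟨d, hbd, had⟩⟩ := hcon
  have hab : a ≠ b := by rintro rfl; exact hbc hac
  have hmm := min_incomp ha hb hab
  apply hfree
  refine ⟨a, c, b, d, hac, hbd, hmm, ?_, ?_, ?_⟩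
  · constructor
    · intro h
      rcases eq_or_lt_of_le h with rfl | h'
      · exact absurd (ha hbd.le) hbd.not_ge
      · exact had h'
    · intro h
      have : a = d := le_antisymm (ha h) h
      rw [this] at hmm
      exact hmm.2 hbd.le
  · constructor
    · intro h
      have : b = c := le_antisymm (hb h) h
      rw [this] at hmm
      exact hmm.1 hac.le
    · intro h
      rcases eq_or_lt_of_le h with rfl | h'
      · exact absurd (hb hac.le) hac.not_ge
      · exact hbc h'
  · exact ⟨fun h => had (lt_of_lt_of_le hac h), fun h => hbc (lt_of_lt_of_le hbd h)⟩

lemma ttfree_subtype (hfree : IsTTFree β) (p : β → Prop) : IsTTFree {y : β // p y} := by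
  rintro ⟨a, b, c, d, h1, h2, ⟨h3, h4⟩, ⟨h5, h6⟩, ⟨h7, h8⟩, ⟨h9, h10⟩⟩
  exact hfree ⟨a.1, b.1, c.1, d.1, Subtype.coe_lt_coe.mpr h1, Subtype.coe_lt_coe.mpr h2,
    ⟨fun h => h3 (Subtype.coe_le_coe.mp h), fun h => h4 (Subtype.coe_le_coe.mp h)⟩,
    ⟨fun h => h5 (Subtype.coe_le_coe.mp h), fun h => h6 (Subtype.coe_le_coe.mp h)⟩,
    ⟨fun h => h7 (Subtype.coe_le_coe.mp h), fun h => h8 (Subtype.coe_le_coe.mp h)⟩,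
    ⟨fun h => h9 (Subtype.coe_le_coe.mp h), fun h => h10 (Subtype.coe_le_coe.mp h)⟩⟩

end Order

lemma exists_x1 [Fintype β] [PartialOrder β] (hfree : IsTTFree β) (hne : Nonempty β) :
    ∃ x₁ : β, IsMin x₁ ∧ ∀ y, IsMin y → ∀ z, y < z → x₁ < z := by
  classical
  obtain ⟨z⟩ := hne
  obtain ⟨w, hw, -⟩ := exists_min_le z
  set s : Finset β := Finset.univ.filter (fun x => IsMin x) with hsdef
  have hs : s.Nonempty := ⟨w, by simp [hsdef, hw]⟩
  obtain ⟨x₁, hx₁s, hmax⟩ := Finset.exists_max_image s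
    (fun x => (Finset.univ.filter (fun t => x < t)).card) hs
  have hx₁ : IsMin x₁ := by simpa [hsdef] using hx₁s
  refine ⟨x₁, hx₁, ?_⟩
  intro y hy z hz
  rcases upsets_comp hfree hx₁ hy with hcase | hcase
  · have hsub : (Finset.univ.filter (fun t => x₁ < t)) ⊆ (Finset.univ.filter (fun t => y < t)) := by
      intro t ht
      simp only [Finset.mem_filter, Finset.mem_univ, true_and] at *
      exact hcase t ht
    have hcard := hmax y (by simp [hsdef, hy])
    have heq := Finset.eq_of_subset_of_card_le hsub hcard
    have hz' : z ∈ Finset.univ.filter (fun t => y < t) := by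
      simp only [Finset.mem_filter, Finset.mem_univ, true_and]
      exact hz
    rw [← heq] at hz'
    simpa using hz'
  · exact hcase z hz

lemma incomp_min [Fintype β] [PartialOrder β] {x₁ : β}
    (hmax : ∀ y, IsMin y → ∀ z, y < z → x₁ < z) {z : β}
    (h2 : ¬ x₁ ≤ z) : IsMin z := by
  obtain ⟨w, hw, hwz⟩ := exists_min_le z
  rcases eq_or_lt_of_le hwz with rfl | hlt
  · exact hw
  · exact absurd (hmax w hw z hlt).le h2

def ACond {γ : Type*} [PartialOrder γ] (σ : Equiv.Perm γ) : Prop :=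
  ∀ a b, σ.SameCycle a b → a ≠ b → ¬ a ≤ b ∧ ¬ b ≤ a

lemma eq_iff_fix {σ : Equiv.Perm β} {x : β} (h : σ x = x) (y : β) : y ≠ x ↔ σ y ≠ x :=
  not_congr ⟨fun hyx => by rw [hyx, h], fun hs => σ.injective (hs.trans h.symm)⟩

variable [DecidableEq β]

def acDel (x₁ x : β) (σ : Equiv.Perm β) (hfix : σ x₁ = x) : Equiv.Perm {y : β // y ≠ x} :=
  (σ * Equiv.swap x₁ x).subtypePerm (fun y => (eq_iff_fix
    (show (σ * Equiv.swap x₁ x) x = x by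
      rw [Equiv.Perm.mul_apply, Equiv.swap_apply_right, hfix]) y).symm)

section PO
variable [Fintype β] [PartialOrder β]

lemma acDel_cond {x₁ x : β} (σ : Equiv.Perm β) (hσ : ACond σ) (hfix : σ x₁ = x) :
    ACond (acDel x₁ x σ hfix) := by
  intro a b hsc hne
  have h0 : (σ * Equiv.swap x₁ x) x = x := by
    rw [Equiv.Perm.mul_apply, Equiv.swap_apply_right, hfix]
  have h1 : (σ * Equiv.swap x₁ x).SameCycle a.1 b.1 := subtypePerm_sc _ _ hsc
  have h2 : σ.SameCycle a.1 b.1 := by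
    have h3 := splice_up (σ * Equiv.swap x₁ x) x₁ x h0 h1
    rwa [mul_assoc, Equiv.swap_mul_self, mul_one] at h3
  have h4 := hσ _ _ h2 (fun h => hne (Subtype.ext h))
  exact ⟨fun hle => h4.1 (Subtype.coe_le_coe.mpr hle),
    fun hle => h4.2 (Subtype.coe_le_coe.mpr hle)⟩

lemma acIns_fix (x₁ x : β) (σs : Equiv.Perm {y : β // y ≠ x}) :
    (Equiv.Perm.ofSubtype σs * Equiv.swap x₁ x) x₁ = x := by
  rw [Equiv.Perm.mul_apply, Equiv.swap_apply_left,
    Equiv.Perm.ofSubtype_apply_of_not_mem _ (by simp)]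

lemma acIns_cond {x₁ x : β} (hx₁ : IsMin x₁)
    (hmax : ∀ y, IsMin y → ∀ z, y < z → x₁ < z) (hx : IsMin x)
    (σs : Equiv.Perm {y : β // y ≠ x}) (hσs : ACond σs) :
    ACond (Equiv.Perm.ofSubtype σs * Equiv.swap x₁ x) := by
  intro a b hsc hne
  have hofx : Equiv.Perm.ofSubtype σs x = x :=
    Equiv.Perm.ofSubtype_apply_of_not_mem _ (by simp)
  rcases eq_or_ne x x₁ with hxx | hxx
  · rw [← hxx, Equiv.swap_self, ← Equiv.Perm.one_def, mul_one] at hsc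
    rcases ofSubtype_sc σs hsc with heq | ⟨ha, hb, sc⟩
    · exact absurd heq hne
    · have h := hσs _ _ sc (fun h => hne (congrArg Subtype.val h))
      exact ⟨fun hle => h.1 (Subtype.mk_le_mk.mpr hle),
        fun hle => h.2 (Subtype.mk_le_mk.mpr hle)⟩
  · have htriple := splice_down (Equiv.Perm.ofSubtype σs) x₁ x hofx hxx hsc
    by_cases hax : a = x <;> by_cases hbx : b = x
    · exact absurd (hax.trans hbx.symm) hne
    · -- a = x, b ≠ x
      subst hax
      have hscb := htriple.2.1 rfl hbx
      have hbmin : IsMin b := by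
        rcases ofSubtype_sc σs hscb with heq | ⟨h₁, hb', sc⟩
        · rw [← heq]; exact hx₁
        · rcases eq_or_ne x₁ b with heq2 | hx₁b
          · rw [← heq2]; exact hx₁
          · have hinc := hσs _ _ sc (fun h => hx₁b (congrArg Subtype.val h))
            exact incomp_min hmax (fun hle => hinc.1 (Subtype.mk_le_mk.mpr hle))
      exact min_incomp hx hbmin hne
    · -- b = x, a ≠ x
      subst hbx
      have hsca := htriple.2.2 hax rfl
      have hamin : IsMin a := by
        rcases ofSubtype_sc σs hsca with heq | ⟨h₁, ha', sc⟩
        · rw [heq]; exact hx₁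
        · rcases eq_or_ne a x₁ with heq2 | hax₁
          · rw [heq2]; exact hx₁
          · have hinc := hσs _ _ sc (fun h => hax₁ (congrArg Subtype.val h))
            exact incomp_min hmax (fun hle => hinc.2 (Subtype.mk_le_mk.mpr hle))
      exact min_incomp hamin hx hne
    · have hscab := htriple.1 hax hbx
      rcases ofSubtype_sc σs hscab with heq | ⟨ha, hb, sc⟩
      · exact absurd heq hne
      · have h := hσs _ _ sc (fun h => hne (congrArg Subtype.val h))
        exact ⟨fun hle => h.1 (Subtype.mk_le_mk.mpr hle),
          fun hle => h.2 (Subtype.mk_le_mk.mpr hle)⟩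

end PO

lemma acIns_acDel {x₁ x : β} (σ : Equiv.Perm β) (hfix : σ x₁ = x) :
    Equiv.Perm.ofSubtype (acDel x₁ x σ hfix) * Equiv.swap x₁ x = σ := by
  have h0 : (σ * Equiv.swap x₁ x) x = x := by
    rw [Equiv.Perm.mul_apply, Equiv.swap_apply_right, hfix]
  have h1 : Equiv.Perm.ofSubtype (acDel x₁ x σ hfix) = σ * Equiv.swap x₁ x := by
    apply Equiv.ext
    intro y
    by_cases hy : y = x
    · rw [hy, Equiv.Perm.ofSubtype_apply_of_not_mem _ (by simp), h0]
    · rw [Equiv.Perm.ofSubtype_apply_of_mem (acDel x₁ x σ hfix) hy]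
      rfl
  rw [h1, mul_assoc, Equiv.swap_mul_self, mul_one]

lemma acDel_acIns {x₁ x : β} (σs : Equiv.Perm {y : β // y ≠ x})
    (hfix : (Equiv.Perm.ofSubtype σs * Equiv.swap x₁ x) x₁ = x) :
    acDel x₁ x (Equiv.Perm.ofSubtype σs * Equiv.swap x₁ x) hfix = σs := by
  apply Equiv.ext
  intro y
  apply Subtype.ext
  have hval : (acDel x₁ x (Equiv.Perm.ofSubtype σs * Equiv.swap x₁ x) hfix y).1 =
      ((Equiv.Perm.ofSubtype σs * Equiv.swap x₁ x) * Equiv.swap x₁ x) y.1 := rfl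
  rw [hval, mul_assoc, Equiv.swap_mul_self, mul_one,
    Equiv.Perm.ofSubtype_apply_of_mem σs y.2]

section Fibers
variable [Fintype β] [PartialOrder β]

lemma ac_fiber_card {x₁ x : β} (hx₁ : IsMin x₁)
    (hmax : ∀ y, IsMin y → ∀ z, y < z → x₁ < z) (hx : IsMin x) :
    Nat.card {σ : {σ : Equiv.Perm β // ACond σ} // σ.1 x₁ = x} =
      Nat.card {σs : Equiv.Perm {y : β // y ≠ x} // ACond σs} := by
  apply Nat.card_congr
  exact {
    toFun := fun σp => ⟨acDel x₁ x σp.1.1 σp.2, acDel_cond σp.1.1 σp.1.2 σp.2⟩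
    invFun := fun σsp => ⟨⟨Equiv.Perm.ofSubtype σsp.1 * Equiv.swap x₁ x,
      acIns_cond hx₁ hmax hx σsp.1 σsp.2⟩, acIns_fix x₁ x σsp.1⟩
    left_inv := fun σp => Subtype.ext (Subtype.ext (acIns_acDel σp.1.1 σp.2))
    right_inv := fun σsp => Subtype.ext (acDel_acIns σsp.1 (acIns_fix x₁ x σsp.1)) }

lemma ac_fiber_empty {x₁ x : β} (hx₁ : IsMin x₁)
    (hmax : ∀ y, IsMin y → ∀ z, y < z → x₁ < z) (hnx : ¬ IsMin x) :
    Nat.card {σ : {σ : Equiv.Perm β // ACond σ} // σ.1 x₁ = x} = 0 := by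
  haveI : IsEmpty {σ : {σ : Equiv.Perm β // ACond σ} // σ.1 x₁ = x} := by
    constructor
    rintro ⟨⟨σ, hσ⟩, hfix⟩
    rcases eq_or_ne x x₁ with rfl | hxx
    · exact hnx hx₁
    · have hsc : σ.SameCycle x₁ x := hfix ▸ sc_apply σ x₁
      have h := hσ _ _ hsc hxx.symm
      exact hnx (incomp_min hmax h.1)
  exact Nat.card_of_isEmpty

end Fibers

def LCond {γ : Type*} [Fintype γ] [PartialOrder γ] (ω : Fin (Fintype.card γ) ≃ γ) : Prop :=
  ∀ i j : Fin (Fintype.card γ), i < j → ¬ ω j ≤ ω i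

section Lin
variable [Fintype β] [PartialOrder β]

def linDel {x : β} (hpos : 0 < Fintype.card β)
    (hcx : Fintype.card {y : β // y ≠ x} + 1 = Fintype.card β)
    (ω : Fin (Fintype.card β) ≃ β) (h0 : ω ⟨0, hpos⟩ = x) :
    Fin (Fintype.card {y : β // y ≠ x}) ≃ {y : β // y ≠ x} where
  toFun i := ⟨ω ⟨i.1 + 1, by omega⟩, fun h => by
    have h2 : (⟨i.1 + 1, by omega⟩ : Fin (Fintype.card β)) = ⟨0, hpos⟩ :=
      ω.injective (h.trans h0.symm)
    simpa using congrArg Fin.val h2⟩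
  invFun y := ⟨(ω.symm y.1).1 - 1, by
    have h1 := (ω.symm y.1).2
    have h2 : (ω.symm y.1).1 ≠ 0 := fun h => y.2 (by
      have h3 : ω.symm y.1 = ⟨0, hpos⟩ := Fin.ext h
      have h4 : y.1 = ω ⟨0, hpos⟩ := by rw [← h3, Equiv.apply_symm_apply]
      exact h4.trans h0)
    omega⟩
  left_inv i := by
    apply Fin.ext
    simp only [Equiv.symm_apply_apply]
    omega
  right_inv y := by
    apply Subtype.ext
    have h2 : (ω.symm y.1).1 ≠ 0 := fun h => y.2 (by
      have h3 : ω.symm y.1 = ⟨0, hpos⟩ := Fin.ext h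
      have h4 : y.1 = ω ⟨0, hpos⟩ := by rw [← h3, Equiv.apply_symm_apply]
      exact h4.trans h0)
    show ω _ = y.1
    have h4 : (ω.symm y.1).1 - 1 + 1 = (ω.symm y.1).1 := by omega
    simp only [h4, Fin.eta, Equiv.apply_symm_apply]

lemma linDel_cond {x : β} (hpos : 0 < Fintype.card β)
    (hcx : Fintype.card {y : β // y ≠ x} + 1 = Fintype.card β)
    (ω : Fin (Fintype.card β) ≃ β) (h0 : ω ⟨0, hpos⟩ = x) (hω : LCond ω) :
    LCond (linDel hpos hcx ω h0) := by
  intro i j hij hle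
  refine hω ⟨i.1 + 1, by omega⟩ ⟨j.1 + 1, by omega⟩ ?_ ?_
  · have := hij
    rw [Fin.lt_def] at this ⊢
    simpa using this
  · exact Subtype.coe_le_coe.mpr hle

def linIns {x : β} (hpos : 0 < Fintype.card β)
    (hcx : Fintype.card {y : β // y ≠ x} + 1 = Fintype.card β)
    (ω' : Fin (Fintype.card {y : β // y ≠ x}) ≃ {y : β // y ≠ x}) :
    Fin (Fintype.card β) ≃ β where
  toFun i := if h : i.1 = 0 then x else (ω' ⟨i.1 - 1, by omega⟩).1
  invFun y := if h : y = x then ⟨0, hpos⟩ else ⟨(ω'.symm ⟨y, h⟩).1 + 1, by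
    have := (ω'.symm ⟨y, h⟩).2
    omega⟩
  left_inv i := by
    dsimp only
    by_cases h : i.1 = 0
    · rw [dif_pos h, dif_pos rfl]
      exact Fin.ext h.symm
    · rw [dif_neg h, dif_neg ((ω' ⟨i.1 - 1, by omega⟩).2)]
      apply Fin.ext
      simp only [Subtype.coe_eta, Equiv.symm_apply_apply]
      show i.1 - 1 + 1 = i.1
      omega
  right_inv y := by
    dsimp only
    by_cases h : y = x
    · rw [dif_pos h, dif_pos rfl]
      exact h.symm
    · rw [dif_neg h, dif_neg (Nat.succ_ne_zero _)]
      simp only [Nat.add_sub_cancel, Fin.eta, Equiv.apply_symm_apply]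

lemma linIns_apply_zero {x : β} (hpos : 0 < Fintype.card β)
    (hcx : Fintype.card {y : β // y ≠ x} + 1 = Fintype.card β)
    (ω' : Fin (Fintype.card {y : β // y ≠ x}) ≃ {y : β // y ≠ x})
    (i : Fin (Fintype.card β)) (h : i.1 = 0) : linIns hpos hcx ω' i = x := by
  simp only [linIns, Equiv.coe_fn_mk]
  rw [dif_pos h]

lemma linIns_apply_pos {x : β} (hpos : 0 < Fintype.card β)
    (hcx : Fintype.card {y : β // y ≠ x} + 1 = Fintype.card β)
    (ω' : Fin (Fintype.card {y : β // y ≠ x}) ≃ {y : β // y ≠ x})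
    (i : Fin (Fintype.card β)) (h : ¬ i.1 = 0) (hb : i.1 - 1 < Fintype.card {y : β // y ≠ x}) :
    linIns hpos hcx ω' i = (ω' ⟨i.1 - 1, hb⟩).1 := by
  simp only [linIns, Equiv.coe_fn_mk]
  rw [dif_neg h]

lemma linIns_fix {x : β} (hpos : 0 < Fintype.card β)
    (hcx : Fintype.card {y : β // y ≠ x} + 1 = Fintype.card β)
    (ω' : Fin (Fintype.card {y : β // y ≠ x}) ≃ {y : β // y ≠ x}) :
    linIns hpos hcx ω' ⟨0, hpos⟩ = x :=
  linIns_apply_zero hpos hcx ω' _ rfl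

lemma linIns_cond {x : β} (hx : IsMin x) (hpos : 0 < Fintype.card β)
    (hcx : Fintype.card {y : β // y ≠ x} + 1 = Fintype.card β)
    (ω' : Fin (Fintype.card {y : β // y ≠ x}) ≃ {y : β // y ≠ x})
    (hω' : LCond ω') : LCond (linIns hpos hcx ω') := by
  intro i j hij hle
  have hj : j.1 ≠ 0 := by
    rw [Fin.lt_def] at hij
    omega
  have hjb : j.1 - 1 < Fintype.card {y : β // y ≠ x} := by
    have := j.2
    omega
  rw [linIns_apply_pos hpos hcx ω' j hj hjb] at hle
  by_cases hi : i.1 = 0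
  · rw [linIns_apply_zero hpos hcx ω' i hi] at hle
    exact (ω' ⟨j.1 - 1, hjb⟩).2 (le_antisymm hle (hx hle))
  · have hib : i.1 - 1 < Fintype.card {y : β // y ≠ x} := by
      have := i.2
      omega
    rw [linIns_apply_pos hpos hcx ω' i hi hib] at hle
    refine hω' ⟨i.1 - 1, hib⟩ ⟨j.1 - 1, hjb⟩ ?_ ?_
    · rw [Fin.lt_def] at hij ⊢
      show i.1 - 1 < j.1 - 1
      omega
    · exact Subtype.coe_le_coe.mp hle

lemma linDel_linIns {x : β} (hpos : 0 < Fintype.card β)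
    (hcx : Fintype.card {y : β // y ≠ x} + 1 = Fintype.card β)
    (ω' : Fin (Fintype.card {y : β // y ≠ x}) ≃ {y : β // y ≠ x}) :
    linDel hpos hcx (linIns hpos hcx ω') (linIns_fix hpos hcx ω') = ω' := by
  apply Equiv.ext
  intro i
  apply Subtype.ext
  show linIns hpos hcx ω' ⟨i.1 + 1, by omega⟩ = (ω' i).1
  rw [linIns_apply_pos hpos hcx ω' _ (Nat.succ_ne_zero _) (by simpa using i.2)]
  exact congrArg (fun k => (ω' k).1) (Fin.ext (show i.1 + 1 - 1 = i.1 by omega))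

lemma linIns_linDel {x : β} (hpos : 0 < Fintype.card β)
    (hcx : Fintype.card {y : β // y ≠ x} + 1 = Fintype.card β)
    (ω : Fin (Fintype.card β) ≃ β) (h0 : ω ⟨0, hpos⟩ = x) :
    linIns hpos hcx (linDel hpos hcx ω h0) = ω := by
  apply Equiv.ext
  intro i
  by_cases h : i.1 = 0
  · rw [linIns_apply_zero hpos hcx _ i h, ← h0]
    exact congrArg ω (Fin.ext h.symm)
  · have hib : i.1 - 1 < Fintype.card {y : β // y ≠ x} := by
      have := i.2
      omega
    rw [linIns_apply_pos hpos hcx _ i h hib]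
    show ω ⟨i.1 - 1 + 1, by omega⟩ = ω i
    exact congrArg ω (Fin.ext (by show i.1 - 1 + 1 = i.1; omega))

lemma lin_fiber_card {x : β} (hx : IsMin x) (hpos : 0 < Fintype.card β)
    (hcx : Fintype.card {y : β // y ≠ x} + 1 = Fintype.card β) :
    Nat.card {ω : {ω : Fin (Fintype.card β) ≃ β // LCond ω} // ω.1 ⟨0, hpos⟩ = x} =
      Nat.card {ω' : Fin (Fintype.card {y : β // y ≠ x}) ≃ {y : β // y ≠ x} // LCond ω'} := by
  apply Nat.card_congr
  exact {
    toFun := fun ωp => ⟨linDel hpos hcx ωp.1.1 ωp.2, linDel_cond hpos hcx ωp.1.1 ωp.2 ωp.1.2⟩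
    invFun := fun ωp' => ⟨⟨linIns hpos hcx ωp'.1, linIns_cond hx hpos hcx ωp'.1 ωp'.2⟩,
      linIns_fix hpos hcx ωp'.1⟩
    left_inv := fun ωp => Subtype.ext (Subtype.ext (linIns_linDel hpos hcx ωp.1.1 ωp.2))
    right_inv := fun ωp' => Subtype.ext (linDel_linIns hpos hcx ωp'.1) }

lemma lin_fiber_empty {x : β} (hpos : 0 < Fintype.card β) (hnx : ¬ IsMin x) :
    Nat.card {ω : {ω : Fin (Fintype.card β) ≃ β // LCond ω} // ω.1 ⟨0, hpos⟩ = x} = 0 := by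
  haveI : IsEmpty {ω : {ω : Fin (Fintype.card β) ≃ β // LCond ω} // ω.1 ⟨0, hpos⟩ = x} := by
    constructor
    rintro ⟨⟨ω, hω⟩, h0⟩
    apply hnx
    intro y hy
    set k := ω.symm y with hk
    have hky : ω k = y := Equiv.apply_symm_apply ω y
    rcases eq_or_ne k ⟨0, hpos⟩ with hk0 | hk0
    · rw [hk0] at hky
      rw [← hky, h0]
    · have hlt : (⟨0, hpos⟩ : Fin (Fintype.card β)) < k := by
        rw [Fin.lt_def]
        exact Nat.pos_of_ne_zero (fun h => hk0 (Fin.ext h))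
      exact absurd (hky.symm ▸ h0 ▸ hy) (hω _ _ hlt)
  exact Nat.card_of_isEmpty

end Lin

lemma card_fiber_sum {α M : Type*} [Fintype α] [Fintype M] (f : α → M) :
    Nat.card α = ∑ x : M, Nat.card {a : α // f a = x} := by
  classical
  rw [← Nat.card_congr (Equiv.sigmaFiberEquiv f), Nat.card_eq_fintype_card,
    Fintype.card_sigma]
  exact Finset.sum_congr rfl (fun x _ => (Nat.card_eq_fintype_card).symm)

lemma card_ne' [Fintype β] (x : β) :
    Fintype.card {y : β // y ≠ x} + 1 = Fintype.card β := by
  classical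
  have h1 : Fintype.card {y : β // y = x} = 1 := Fintype.card_subtype_eq x
  have h2 : Fintype.card {y : β // y ≠ x} =
      Fintype.card β - Fintype.card {y : β // y = x} := Fintype.card_subtype_compl _
  have h3 : 0 < Fintype.card β := Fintype.card_pos_iff.mpr ⟨x⟩
  omega

universe u

theorem key (n : ℕ) : ∀ (β : Type u) [Fintype β] [PartialOrder β],
    Fintype.card β = n → IsTTFree β →
    Nat.card {ω : Fin (Fintype.card β) ≃ β // LCond ω} =
      Nat.card {σ : Equiv.Perm β // ACond σ} := by
  induction n with
  | zero =>
    intro β _ _ hc _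
    haveI hβ : IsEmpty β := Fintype.card_eq_zero_iff.mp hc
    haveI hfin : IsEmpty (Fin (Fintype.card β)) := ⟨fun i => absurd i.2 (by omega)⟩
    have h1 : Nat.card {ω : Fin (Fintype.card β) ≃ β // LCond ω} = 1 := by
      haveI : Nonempty {ω : Fin (Fintype.card β) ≃ β // LCond ω} :=
        ⟨⟨Equiv.equivOfIsEmpty _ _, fun i => (IsEmpty.false i).elim⟩⟩
      haveI : Subsingleton {ω : Fin (Fintype.card β) ≃ β // LCond ω} :=
        ⟨fun a b => Subtype.ext (Equiv.ext fun i => (IsEmpty.false i).elim)⟩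
      exact Nat.card_unique
    have h2 : Nat.card {σ : Equiv.Perm β // ACond σ} = 1 := by
      haveI : Nonempty {σ : Equiv.Perm β // ACond σ} :=
        ⟨⟨1, fun a => (IsEmpty.false a).elim⟩⟩
      haveI : Subsingleton {σ : Equiv.Perm β // ACond σ} :=
        ⟨fun a b => Subtype.ext (Equiv.ext fun i => (IsEmpty.false i).elim)⟩
      exact Nat.card_unique
    rw [h1, h2]
  | succ n ih =>
    intro β instF instP hc hfree
    classical
    have hpos : 0 < Fintype.card β := by omega
    have hne : Nonempty β := Fintype.card_pos_iff.mp hpos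
    obtain ⟨x₁, hx₁, hmax⟩ := exists_x1 hfree hne
    rw [card_fiber_sum (fun ωp : {ω : Fin (Fintype.card β) ≃ β // LCond ω} => ωp.1 ⟨0, hpos⟩),
        card_fiber_sum (fun σp : {σ : Equiv.Perm β // ACond σ} => σp.1 x₁)]
    apply Finset.sum_congr rfl
    intro x _
    by_cases hx : IsMin x
    · have hcx : Fintype.card {y : β // y ≠ x} + 1 = Fintype.card β := card_ne' x
      rw [lin_fiber_card hx hpos hcx, ac_fiber_card hx₁ hmax hx]
      exact ih {y : β // y ≠ x} (by omega) (ttfree_subtype hfree _)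
    · rw [lin_fiber_empty hpos hx, ac_fiber_empty hx₁ hmax hx]


end Auxiliary

/-- for a finite `(2+2)`-free poset `P`, the number of linear
extensions of `P` equals the number of permutations of the ground set all of whose
orbits (cycles) are antichains of `P`. -/
theorem stmt10 (β : Type*) [Fintype β] [PartialOrder β] (hfree : IsTTFree β) :
    Nat.card {ω : Fin (Fintype.card β) ≃ β //
        ∀ i j : Fin (Fintype.card β), i < j → ¬ ω j ≤ ω i} =
      Nat.card {σ : Equiv.Perm β //
        ∀ x y : β, σ.SameCycle x y → x ≠ y → ¬ x ≤ y ∧ ¬ y ≤ x} := by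
  exact key (Fintype.card β) β rfl hfree
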